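/- The total area A_{m} under all Dyck paths of semilength m (so length 2m) satisfies the recurrence A_{m-1} = (m−1)·Cat_{m−1} + Σ_{r+s=m, r,s≥1} (A_{r−1}·Cat_{s−1} + A_{s−1}·Cat_{r−1}) for every m ≥ 1. -/

import Mathlib

open Finset
open scoped Classical

/-- The height of a `±1`-path (encoded by `f : Fin m → Bool`, `true` = up-step)
after its first `i` steps. -/
def ht {m : ℕ} (f : Fin m → Bool) (i : ℕ) : ℤ :=
  ∑ j ∈ Finset.univ.filter (fun j : Fin m => (j : ℕ) < i),
    (if f j then (1 : ℤ) else -1)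

/-- `f` is a Dyck path: it stays nonnegative and ends at height `0`. -/
def IsDyck {m : ℕ} (f : Fin m → Bool) : Prop :=
  (∀ i : ℕ, i ≤ m → 0 ≤ ht f i) ∧ ht f m = 0

/-- The area under a path: the sum of its heights after each step. -/
def area {m : ℕ} (f : Fin m → Bool) : ℤ :=
  ∑ i ∈ Finset.range m, ht f (i+1)

/-- The set of all Dyck paths of length `2k`. -/
noncomputable def dyckSet (k : ℕ) : Finset (Fin (2*k) → Bool) :=
  Finset.univ.filter (fun f => IsDyck f)

/-- The total area `A_k` under all Dyck paths of length `2k`. -/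
noncomputable def totalArea (k : ℕ) : ℤ :=
  ∑ f ∈ dyckSet k, area f

/-! ### List-level machinery -/

open DyckStep

/-- Signed value of a step. -/
def stepval : DyckStep → ℤ | U => 1 | D => -1

/-- Signed sum of a list of steps. -/
def lsum (l : List DyckStep) : ℤ := (l.map stepval).sum

@[simp] lemma lsum_nil : lsum [] = 0 := rfl

lemma lsum_append (l l' : List DyckStep) : lsum (l ++ l') = lsum l + lsum l' := by simp [lsum]

lemma lsum_count (l : List DyckStep) : lsum l = (l.count U : ℤ) - l.count D := by
  induction l with
  | nil => simp
  | cons a t ih => cases a <;> simp [lsum, List.count_cons, stepval] at ih ⊢ <;> omega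

/-- The area under a list of steps. -/
def larea (l : List DyckStep) : ℤ := ∑ i ∈ Finset.range l.length, lsum (l.take (i+1))

lemma larea_append (l l' : List DyckStep) :
    larea (l ++ l') = larea l + l'.length * lsum l + larea l' := by
  unfold larea
  rw [List.length_append, Finset.sum_range_add]
  have h1 : ∀ i ∈ Finset.range l.length,
      lsum ((l ++ l').take (i+1)) = lsum (l.take (i+1)) := by
    intro i hi
    rw [Finset.mem_range] at hi
    rw [List.take_append, show i + 1 - l.length = 0 by omega]
    simp
  have h2 : ∀ i ∈ Finset.range l'.length,
      lsum ((l ++ l').take (l.length + i + 1)) = lsum l + lsum (l'.take (i+1)) := by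
    intro i hi
    rw [List.take_append, List.take_of_length_le (by omega),
      show l.length + i + 1 - l.length = i + 1 by omega, lsum_append]
  rw [Finset.sum_congr rfl h1, Finset.sum_congr rfl h2, Finset.sum_add_distrib,
    Finset.sum_const, Finset.card_range, nsmul_eq_mul]
  ring

/-! ### DyckWord-level area -/

namespace DyckWord

lemma lsum_toList (p : DyckWord) : lsum p.toList = 0 := by
  rw [lsum_count, p.count_U_eq_count_D]; ring

/-- Area of a Dyck word. -/
def warea (p : DyckWord) : ℤ := larea p.toList

lemma warea_add (p q : DyckWord) : warea (p + q) = warea p + warea q := by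
  have : (p + q).toList = p.toList ++ q.toList := rfl
  rw [warea, this, larea_append, p.lsum_toList]
  simp [warea]

lemma warea_nest (p : DyckWord) :
    warea p.nest = warea p + 2 * p.semilength + 1 := by
  have h : p.nest.toList = [U] ++ p.toList ++ [D] := rfl
  have hU : larea [U] = 1 := by simp [larea, lsum, stepval]
  have hD : larea [D] = -1 := by simp [larea, lsum, stepval]
  have hlu : lsum ([U] ++ p.toList) = 1 := by
    rw [lsum_append, p.lsum_toList]; simp [lsum, stepval]
  have hu1 : lsum [U] = 1 := by simp [lsum, stepval]
  rw [warea, h, larea_append, larea_append, hU, hD, hlu, hu1,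
    ← p.two_mul_semilength_eq_length]
  simp only [warea, List.length_singleton]
  push_cast
  ring

lemma ne_zero_of_semilength_pos {p : DyckWord} (h : 0 < p.semilength) : p ≠ 0 := by
  intro h0; rw [h0] at h; simp at h

/-- First-return decomposition as an equivalence. -/
noncomputable def decompEquiv (n : ℕ) :
    (Σ i : Fin (n+1), {x : DyckWord // x.semilength = (i:ℕ)} ×
      {y : DyckWord // y.semilength = n - (i:ℕ)}) ≃ {p : DyckWord // p.semilength = n+1} :=
  Equiv.ofBijective
    (fun s => ⟨s.2.1.1.nest + s.2.2.1, by
      have hx := s.2.1.2; have hy := s.2.2.2; have hi := s.1.2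
      rw [semilength_add, semilength_nest, hx, hy]; omega⟩)
    ⟨by
      rintro ⟨i, ⟨x, hx⟩, ⟨y, hy⟩⟩ ⟨i', ⟨x', hx'⟩, ⟨y', hy'⟩⟩ h
      simp only [Subtype.mk_eq_mk] at h
      have e1 : x = x' := by
        have := congrArg insidePart h
        rwa [insidePart_add x.nest_ne_zero, insidePart_nest,
          insidePart_add x'.nest_ne_zero, insidePart_nest] at this
      subst e1
      have e2 : y = y' := add_left_cancel h
      subst e2
      have e3 : i = i' := Fin.ext (by omega)
      subst e3
      rfl,
     by
      rintro ⟨p, hp⟩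
      have hp0 : p ≠ 0 := ne_zero_of_semilength_pos (by omega)
      have hs := p.semilength_insidePart_add_semilength_outsidePart_add_one hp0
      refine ⟨⟨⟨p.insidePart.semilength, by omega⟩, ⟨p.insidePart, rfl⟩,
        ⟨p.outsidePart, ?_⟩⟩, ?_⟩
      · show p.outsidePart.semilength = n - p.insidePart.semilength; omega
      · exact Subtype.ext (p.nest_insidePart_add_outsidePart hp0)⟩

end DyckWord

open DyckWord in
/-- Total area over Dyck words of semilength `k`. -/
noncomputable def B (k : ℕ) : ℤ := ∑ p : {p : DyckWord // p.semilength = k}, DyckWord.warea p.1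

/-- Catalan numbers as integers. -/
noncomputable def C (k : ℕ) : ℤ := (catalan k : ℤ)

lemma card_sl (k : ℕ) : (Fintype.card {p : DyckWord // p.semilength = k} : ℤ) = C k := by
  rw [DyckWord.card_dyckWord_semilength_eq_catalan]; rfl

open DyckWord in
lemma B_succ (n : ℕ) :
    B (n+1) = ∑ i ∈ Finset.range (n+1),
      (B i * C (n-i) + B (n-i) * C i + (2*(i:ℤ)+1) * C i * C (n-i)) := by
  have key := Fintype.sum_equiv (DyckWord.decompEquiv n)
    (fun s => warea s.2.1.1 + warea s.2.2.1 + (2*(s.1:ℤ)+1))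
    (fun p => warea p.1)
    (by
      rintro ⟨i, ⟨x, hx⟩, ⟨y, hy⟩⟩
      show _ = warea (x.nest + y)
      rw [warea_add, warea_nest, hx]
      ring)
  rw [B, ← key, ← Finset.univ_sigma_univ, Finset.sum_sigma, ← Fin.sum_univ_eq_sum_range]
  refine Finset.sum_congr rfl fun i _ => ?_
  rw [Fintype.sum_prod_type]
  simp only [Finset.sum_add_distrib, Finset.sum_const, Finset.card_univ, nsmul_eq_mul,
    ← Finset.sum_mul, ← Finset.mul_sum]
  rw [← B, ← B]
  have c1 := card_sl (i : ℕ)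
  have c2 := card_sl (n - (i : ℕ))
  push_cast at c1 c2 ⊢
  rw [c1, c2]
  ring

lemma catalan_conv (n : ℕ) : ∑ i ∈ Finset.range (n+1), C i * C (n-i) = C (n+1) := by
  rw [C, catalan_succ, ← Fin.sum_univ_eq_sum_range (fun i => C i * C (n-i)) (n+1)]
  push_cast
  rfl

lemma weighted_conv (n : ℕ) :
    ∑ i ∈ Finset.range (n+1), (2*(i:ℤ)+1) * C i * C (n-i) = ((n:ℤ)+1) * C (n+1) := by
  set T := ∑ i ∈ Finset.range (n+1), (2*(i:ℤ)+1) * C i * C (n-i) with hT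
  have hrefl : ∑ j ∈ Finset.range (n+1), (2*((n-j : ℕ):ℤ)+1) * C (n-j) * C (n-(n-j)) = T := by
    rw [hT]
    exact Finset.sum_range_reflect (fun i => (2*(i:ℤ)+1) * C i * C (n-i)) (n+1) |>.symm ▸
      (Finset.sum_range_reflect (fun i => (2*(i:ℤ)+1) * C i * C (n-i)) (n+1))
  have h2 : 2 * T = (2*(n:ℤ)+2) * ∑ i ∈ Finset.range (n+1), C i * C (n-i) := by
    rw [two_mul]
    nth_rewrite 1 [← hrefl]
    rw [← Finset.sum_add_distrib, Finset.mul_sum]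
    refine Finset.sum_congr rfl fun i hi => ?_
    rw [Finset.mem_range] at hi
    have h1 : n - (n - i) = i := by omega
    have h3 : ((n - i : ℕ) : ℤ) = (n : ℤ) - i := by
      have : i ≤ n := by omega
      push_cast [this]; ring
    rw [h1, h3]
    ring
  have := catalan_conv n
  rw [this] at h2
  have h4 : (2:ℤ) * T = 2 * (((n:ℤ)+1) * C (n+1)) := by rw [h2]; ring
  exact mul_left_cancel₀ (two_ne_zero) h4

/-! ### Transport from the `Fin (2k) → Bool` encoding to `DyckWord` -/

/-- Encode a boolean path as a list of steps. -/
def toSteps {m : ℕ} (f : Fin m → Bool) : List DyckStep :=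
  List.ofFn (fun j => if f j then U else D)

@[simp] lemma length_toSteps {m : ℕ} (f : Fin m → Bool) : (toSteps f).length = m :=
  List.length_ofFn

lemma ht_eq_lsum {m : ℕ} (f : Fin m → Bool) (i : ℕ) :
    ht f i = lsum ((toSteps f).take i) := by
  induction i with
  | zero =>
    rw [ht]
    simp
  | succ i ih =>
    by_cases h : i < m
    · have hfilter : (Finset.univ.filter (fun j : Fin m => (j:ℕ) < i+1))
          = insert ⟨i, h⟩ (Finset.univ.filter (fun j : Fin m => (j:ℕ) < i)) := by
        ext j
        simp only [Finset.mem_filter, Finset.mem_univ, true_and, Finset.mem_insert,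
          Fin.ext_iff]
        omega
      have hnot : (⟨i,h⟩ : Fin m) ∉ Finset.univ.filter (fun j : Fin m => (j:ℕ) < i) := by
        simp
      rw [ht, hfilter, Finset.sum_insert hnot]
      have hih : ∑ j ∈ Finset.univ.filter (fun j : Fin m => (j:ℕ) < i),
          (if f j then (1:ℤ) else -1) = lsum ((toSteps f).take i) := ih
      rw [hih, List.take_succ]
      have hsome : (toSteps f)[i]? = some (if f ⟨i,h⟩ then U else D) := by
        rw [List.getElem?_eq_getElem (by simpa using h)]
        simp [toSteps]
      rw [hsome, Option.toList_some, lsum_append]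
      cases hf : f ⟨i, h⟩ <;> simp [hf, lsum, stepval] <;> ring
    · have hfilter : (Finset.univ.filter (fun j : Fin m => (j:ℕ) < i+1))
          = Finset.univ.filter (fun j : Fin m => (j:ℕ) < i) := by
        ext j
        have := j.2
        simp only [Finset.mem_filter, Finset.mem_univ, true_and]
        omega
      rw [ht, hfilter]
      have hih : ∑ j ∈ Finset.univ.filter (fun j : Fin m => (j:ℕ) < i),
          (if f j then (1:ℤ) else -1) = lsum ((toSteps f).take i) := ih
      rw [hih, List.take_succ]
      have hnone : (toSteps f)[i]? = none := by
        rw [List.getElem?_eq_none]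
        simpa using Nat.le_of_not_lt h
      rw [hnone]
      simp

lemma area_eq_larea {m : ℕ} (f : Fin m → Bool) : area f = larea (toSteps f) := by
  rw [area, larea, length_toSteps]
  exact Finset.sum_congr rfl fun i _ => ht_eq_lsum f (i+1)

/-- The Dyck word associated to a Dyck path. -/
def toDW {k : ℕ} (f : Fin (2*k) → Bool) (hf : IsDyck f) : DyckWord where
  toList := toSteps f
  count_U_eq_count_D := by
    have h := hf.2
    rw [ht_eq_lsum, List.take_of_length_le (by simp)] at h
    have hc := lsum_count (toSteps f)
    omega
  count_D_le_count_U := fun i => by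
    rcases le_or_gt i (2*k) with h | h
    · have h1 := hf.1 i h
      rw [ht_eq_lsum] at h1
      have hc := lsum_count ((toSteps f).take i)
      omega
    · rw [List.take_of_length_le (by simp; omega)]
      have h2 := hf.2
      rw [ht_eq_lsum, List.take_of_length_le (by simp)] at h2
      have hc := lsum_count (toSteps f)
      omega

lemma toDW_semilength {k : ℕ} (f : Fin (2*k) → Bool) (hf : IsDyck f) :
    (toDW f hf).semilength = k := by
  have h := (toDW f hf).two_mul_semilength_eq_length
  have h2 : (toDW f hf).toList.length = 2*k := by
    show (toSteps f).length = 2*k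
    simp
  omega

lemma toDW_warea {k : ℕ} (f : Fin (2*k) → Bool) (hf : IsDyck f) :
    (toDW f hf).warea = area f := by
  rw [area_eq_larea]; rfl

/-- The Dyck path associated to a Dyck word of semilength `k`. -/
def fromDW {k : ℕ} (p : DyckWord) (hp : p.semilength = k) : Fin (2*k) → Bool :=
  fun j => decide (p.toList[(j:ℕ)]'(by
    rw [← p.two_mul_semilength_eq_length, hp]; exact j.2) = U)

lemma toSteps_fromDW {k : ℕ} (p : DyckWord) (hp : p.semilength = k) :
    toSteps (fromDW p hp) = p.toList := by
  have hlen : p.toList.length = 2*k := by rw [← p.two_mul_semilength_eq_length, hp]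
  apply List.ext_getElem (by simp [hlen])
  intro j h1 h2
  simp only [toSteps, List.getElem_ofFn, fromDW]
  rcases (p.toList[j]'h2).dichotomy with h | h <;> simp [h]

lemma isDyck_fromDW {k : ℕ} (p : DyckWord) (hp : p.semilength = k) :
    IsDyck (fromDW p hp) := by
  have hlen : p.toList.length = 2*k := by rw [← p.two_mul_semilength_eq_length, hp]
  constructor
  · intro i hi
    rw [ht_eq_lsum, toSteps_fromDW, lsum_count]
    have := p.count_D_le_count_U i
    omega
  · rw [ht_eq_lsum, toSteps_fromDW, List.take_of_length_le (by omega), lsum_count,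
      p.count_U_eq_count_D]
    ring

lemma mem_dyckSet {k : ℕ} (f : Fin (2*k) → Bool) : f ∈ dyckSet k ↔ IsDyck f := by
  simp [dyckSet]

lemma totalArea_eq_B (k : ℕ) : totalArea k = B k := by
  rw [totalArea, B]
  refine Finset.sum_bij' (i := fun f hf => (⟨toDW f ((mem_dyckSet f).mp hf),
      toDW_semilength f ((mem_dyckSet f).mp hf)⟩ : {p : DyckWord // p.semilength = k}))
    (j := fun p _ => fromDW p.1 p.2) ?_ ?_ ?_ ?_ ?_
  · intro f hf; exact Finset.mem_univ _
  · intro p _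
    rw [mem_dyckSet]
    exact isDyck_fromDW p.1 p.2
  · intro f hf
    funext j
    have hf' := (mem_dyckSet f).mp hf
    simp only [fromDW, toDW, toSteps, List.getElem_ofFn]
    cases hfj : f j <;> simp [hfj]
  · intro p _
    exact Subtype.ext (DyckWord.ext (toSteps_fromDW p.1 p.2))
  · intro f hf
    exact (toDW_warea f ((mem_dyckSet f).mp hf)).symm

/-- Recurrence for the total area of Dyck paths:
`A_{m-1} = (m−1)·Cat_{m−1} + Σ_{r+s=m, r,s≥1} (A_{r−1}·Cat_{s−1} + A_{s−1}·Cat_{r−1})`. -/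
theorem totalArea_recurrence (m : ℕ) (hm : 1 ≤ m) :
    totalArea (m-1) =
      ((m : ℤ) - 1) * catalan (m-1)
        + ∑ r ∈ Finset.Ico 1 m,
            (totalArea (r-1) * catalan (m-r-1) + totalArea (m-r-1) * catalan (r-1)) := by
  obtain ⟨M, rfl⟩ : ∃ M, m = M + 1 := ⟨m - 1, by omega⟩
  simp only [Nat.add_sub_cancel]
  cases M with
  | zero =>
    rw [show totalArea 0 = 0 by simp [totalArea, area]]
    simp
  | succ n =>
    have hrhs : ∑ r ∈ Finset.Ico 1 (n+1+1),
        (totalArea (r-1) * (catalan (n+1+1-r-1) : ℤ) + totalArea (n+1+1-r-1) * catalan (r-1))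
        = ∑ i ∈ Finset.range (n+1), (B i * C (n-i) + B (n-i) * C i) := by
      rw [Finset.sum_Ico_eq_sum_range]
      simp only [Nat.add_sub_cancel]
      refine Finset.sum_congr rfl fun i hi => ?_
      rw [Finset.mem_range] at hi
      have e1 : 1 + i - 1 = i := by omega
      have e2 : n + 1 + 1 - (1 + i) - 1 = n - i := by omega
      rw [e1, e2, totalArea_eq_B, totalArea_eq_B]
      rfl
    rw [totalArea_eq_B, B_succ, hrhs, Finset.sum_add_distrib, weighted_conv]
    have : ((n:ℤ) + 1 + 1 - 1) = (n:ℤ) + 1 := by ring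
    push_cast
    rw [show C (n+1) = (catalan (n+1) : ℤ) from rfl]
    ring
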